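/- arXiv:1606.02060 — 7 statements merged into one kernel-verified Lean document; each statement's English description precedes it below -/
import Mathlib

section
/- If n ≥ 3m−2, then the queen's domination number of the m×n board equals m. -/
/-- A queen on square `p` attacks square `q` (distinct squares sharing a
row, column, or diagonal). Squares are `(column, row)` pairs. -/
def attacks (p q : ℤ × ℤ) : Prop :=
  p ≠ q ∧ (p.1 = q.1 ∨ p.2 = q.2 ∨ |p.1 - q.1| = |p.2 - q.2|)

instance : ∀ p q : ℤ × ℤ, Decidable (attacks p q) := fun p q => by
  unfold attacks; infer_instance

/-- The m×n board (m rows, n columns): squares (x,y), 1 ≤ x ≤ n, 1 ≤ y ≤ m. -/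
noncomputable def board (m n : ℕ) : Finset (ℤ × ℤ) :=
  Finset.Icc 1 (n : ℤ) ×ˢ Finset.Icc 1 (m : ℤ)

/-- `D` dominates the board `B`: every square of `B` is in `D` or attacked by a queen of `D`. -/
def Dominates (B D : Finset (ℤ × ℤ)) : Prop :=
  ∀ p ∈ B, p ∈ D ∨ ∃ q ∈ D, attacks q p

/-- Queen domination number of the m×n board. -/
noncomputable def gamma (m n : ℕ) : ℕ :=
  sInf {k | ∃ D ⊆ board m n, D.card = k ∧ Dominates (board m n) D}

/-- If n ≥ 3m−2, then the queen's domination number of the m×n board equals m. -/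
theorem gamma_eq_m_of_wide (m n : ℕ) (hm : 1 ≤ m) (hmn : m ≤ n)
    (h : 3 * m - 2 ≤ n) : gamma m n = m := by
  have hn1 : (1 : ℤ) ≤ (n : ℤ) := by exact_mod_cast Nat.one_le_iff_ne_zero.mpr (by omega)
  -- Upper bound witness: queens in column 1, one per row.
  set D₀ : Finset (ℤ × ℤ) := (Finset.Icc 1 (m : ℤ)).image (fun i => ((1 : ℤ), i)) with hD₀
  have hD₀sub : D₀ ⊆ board m n := by
    intro p hp
    simp only [hD₀, Finset.mem_image] at hp
    obtain ⟨i, hi, rfl⟩ := hp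
    simp [board, Finset.mem_product, hn1, Finset.mem_Icc] at hi ⊢
    exact hi
  have hD₀card : D₀.card = m := by
    rw [hD₀, Finset.card_image_of_injective _ (fun a b hab => by simpa using hab)]
    simp
  have hD₀dom : Dominates (board m n) D₀ := by
    intro p hp
    simp only [board, Finset.mem_product, Finset.mem_Icc] at hp
    by_cases hq : p ∈ D₀
    · exact Or.inl hq
    · refine Or.inr ⟨((1 : ℤ), p.2), ?_, ?_, by simp⟩
      · simp only [hD₀, Finset.mem_image]
        exact ⟨p.2, by simp [Finset.mem_Icc, hp.2], rfl⟩
      · intro hcontra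
        apply hq
        simp only [hD₀, Finset.mem_image]
        exact ⟨p.2, by simp [Finset.mem_Icc, hp.2], hcontra⟩
  have hmem : m ∈ {k | ∃ D ⊆ board m n, D.card = k ∧ Dominates (board m n) D} :=
    ⟨D₀, hD₀sub, hD₀card, hD₀dom⟩
  -- Lower bound: every element of the set is ≥ m.
  have hlb : ∀ k ∈ {k | ∃ D ⊆ board m n, D.card = k ∧ Dominates (board m n) D}, m ≤ k := by
    rintro k ⟨D, hDsub, rfl, hDdom⟩
    by_contra hk
    push_neg at hk
    -- there is a queen-free row y0
    have hrow : ∃ y0 ∈ Finset.Icc (1 : ℤ) (m : ℤ), ∀ q ∈ D, q.2 ≠ y0 := by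
      by_contra hcon
      push_neg at hcon
      have hsub : Finset.Icc (1 : ℤ) (m : ℤ) ⊆ D.image Prod.snd := by
        intro y hy
        obtain ⟨q, hq, hq2⟩ := hcon y hy
        exact Finset.mem_image.mpr ⟨q, hq, hq2⟩
      have h1 : (Finset.Icc (1 : ℤ) (m : ℤ)).card ≤ (D.image Prod.snd).card :=
        Finset.card_le_card hsub
      have h2 : (D.image Prod.snd).card ≤ D.card := Finset.card_image_le
      have h3 : (Finset.Icc (1 : ℤ) (m : ℤ)).card = m := by
        rw [Int.card_Icc]; omega
      omega
    obtain ⟨y0, hy0, hfree⟩ := hrow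
    -- each queen covers at most 3 squares of row y0
    set cover : ℤ × ℤ → Finset ℤ :=
      fun q => {q.1 - |q.2 - y0|, q.1, q.1 + |q.2 - y0|} with hcover
    have hsub : Finset.Icc (1 : ℤ) (n : ℤ) ⊆ D.biUnion cover := by
      intro x hx
      have hxb : ((x, y0) : ℤ × ℤ) ∈ board m n := by
        simp only [board, Finset.mem_product]
        exact ⟨hx, hy0⟩
      rcases hDdom _ hxb with hin | ⟨q, hq, hne, hatt⟩
      · exact absurd rfl (hfree _ hin)
      · refine Finset.mem_biUnion.mpr ⟨q, hq, ?_⟩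
        simp only [hcover, Finset.mem_insert, Finset.mem_singleton]
        rcases hatt with h1 | h2 | h3
        · right; left; exact h1.symm
        · exact absurd h2 (hfree _ hq)
        · simp only at h3
          obtain ⟨d, hd⟩ : ∃ d, |q.2 - y0| = d := ⟨_, rfl⟩
          rw [hd] at h3 ⊢
          have hd0 : 0 ≤ d := hd ▸ abs_nonneg _
          rcases (abs_eq hd0).mp h3 with h4 | h4
          · left; omega
          · right; right; omega
    have hcard : ((n : ℕ)) ≤ 3 * D.card := by
      have h1 : (Finset.Icc (1 : ℤ) (n : ℤ)).card ≤ (D.biUnion cover).card :=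
        Finset.card_le_card hsub
      have h2 : (D.biUnion cover).card ≤ ∑ q ∈ D, (cover q).card :=
        Finset.card_biUnion_le
      have h3 : ∑ q ∈ D, (cover q).card ≤ ∑ _q ∈ D, 3 := by
        refine Finset.sum_le_sum fun q _ => ?_
        calc (cover q).card
            ≤ ({q.1, q.1 + |q.2 - y0|} : Finset ℤ).card + 1 := Finset.card_insert_le _ _
          _ ≤ 3 := by
              have := Finset.card_insert_le q.1 ({q.1 + |q.2 - y0|} : Finset ℤ)
              simp only [Finset.card_singleton] at this
              omega
      have h4 : (Finset.Icc (1 : ℤ) (n : ℤ)).card = n := by rw [Int.card_Icc]; omega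
      simp only [Finset.sum_const, smul_eq_mul] at h3
      omega
    omega
  have hne : {k | ∃ D ⊆ board m n, D.card = k ∧ Dominates (board m n) D}.Nonempty := ⟨m, hmem⟩
  refine le_antisymm (Nat.sInf_le hmem) (hlb _ (Nat.sInf_mem hne))
end

section
/- Any queen placed on an m×n board (m rows) attacks at most 3 squares in any row other than its own; consequently, any set of m−1 queens leaves some square uncovered whenever n ≥ 3m−2 and m ≥ 1, i.e., m−1 queens cannot dominate Q_{m×n} when n ≥ 3m−2. -/
lemma row_attack_bound (m n : ℕ) (q : ℤ × ℤ) (r : ℤ) (hr : r ≠ q.2) :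
    ((board m n).filter (fun p => p.2 = r ∧ attacks q p)).card ≤ 3 := by
  have hsub : (board m n).filter (fun p => p.2 = r ∧ attacks q p) ⊆
      {(q.1 - |q.2 - r|, r), (q.1, r), (q.1 + |q.2 - r|, r)} := by
    intro p hp
    simp only [Finset.mem_filter] at hp
    obtain ⟨-, hpr, -, hatt⟩ := hp
    have hp' : p = (p.1, p.2) := rfl
    rcases hatt with h1 | h2 | h3
    · simp only [Finset.mem_insert, Finset.mem_singleton]
      right; left; rw [hp', h1, hpr]
    · exact absurd (h2.trans hpr) (Ne.symm hr)
    · have : |q.1 - p.1| = |q.2 - r| := by rw [h3, hpr]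
      rcases (abs_eq (abs_nonneg _)).mp this with h | h
      · simp only [Finset.mem_insert, Finset.mem_singleton]
        left; rw [hp', hpr]; congr 1; linarith
      · simp only [Finset.mem_insert, Finset.mem_singleton]
        right; right; rw [hp', hpr]; congr 1; linarith
  calc ((board m n).filter (fun p => p.2 = r ∧ attacks q p)).card
      ≤ _ := Finset.card_le_card hsub
    _ ≤ 3 := by
        apply le_trans (Finset.card_insert_le _ _)
        apply Nat.succ_le_succ
        apply le_trans (Finset.card_insert_le _ _)
        simp

/-- A queen attacks at most 3 squares in any row other than its own; consequently,
when n ≥ 3m−2 (and m ≥ 1), no set of at most m−1 queens dominates the m×n board. -/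
theorem at_most_three_per_row_and_no_small_dominating_set (m n : ℕ) (hm : 1 ≤ m)
    (h : 3 * m - 2 ≤ n) :
    (∀ q : ℤ × ℤ, ∀ r : ℤ, r ≠ q.2 →
      ((board m n).filter (fun p => p.2 = r ∧ attacks q p)).card ≤ 3) ∧
    (∀ D ⊆ board m n, D.card ≤ m - 1 → ¬ Dominates (board m n) D) := by
  refine ⟨fun q r hr => row_attack_bound m n q r hr, ?_⟩
  intro D hD hcard hdom
  -- find a row r with no queen
  have hlt : (D.image Prod.snd).card < (Finset.Icc (1:ℤ) (m:ℤ)).card := by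
    have h1 : (D.image Prod.snd).card ≤ D.card := Finset.card_image_le
    have h2 : (Finset.Icc (1:ℤ) (m:ℤ)).card = m := by
      rw [Int.card_Icc]; omega
    omega
  have hns : ¬ (Finset.Icc (1:ℤ) (m:ℤ) ⊆ D.image Prod.snd) :=
    fun hs => absurd (Finset.card_le_card hs) (not_le.mpr hlt)
  obtain ⟨r, hrm, hrD⟩ := Finset.not_subset.mp hns
  have hnoq : ∀ q ∈ D, q.2 ≠ r := by
    intro q hq hqr
    exact hrD (Finset.mem_image.mpr ⟨q, hq, hqr⟩)
  -- the row r
  set R : Finset (ℤ × ℤ) := Finset.Icc (1:ℤ) (n:ℤ) ×ˢ {r} with hR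
  have hRcard : R.card = n := by
    rw [hR, Finset.card_product, Int.card_Icc, Finset.card_singleton]
    omega
  have hRsub : R ⊆ D.biUnion (fun q => (board m n).filter (fun p => p.2 = r ∧ attacks q p)) := by
    intro p hp
    have hpB : p ∈ board m n := by
      rw [hR, Finset.mem_product] at hp
      rw [board, Finset.mem_product]
      refine ⟨hp.1, ?_⟩
      have := Finset.mem_singleton.mp hp.2
      rw [this]; exact hrm
    have hpr : p.2 = r := by
      rw [hR, Finset.mem_product] at hp
      exact Finset.mem_singleton.mp hp.2
    rcases hdom p hpB with hpD | ⟨q, hq, hatt⟩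
    · exact absurd hpr (hnoq p hpD)
    · exact Finset.mem_biUnion.mpr ⟨q, hq, Finset.mem_filter.mpr ⟨hpB, hpr, hatt⟩⟩
  have hbound : R.card ≤ 3 * D.card := by
    calc R.card ≤ (D.biUnion _).card := Finset.card_le_card hRsub
      _ ≤ ∑ q ∈ D, ((board m n).filter (fun p => p.2 = r ∧ attacks q p)).card :=
          Finset.card_biUnion_le
      _ ≤ ∑ _q ∈ D, 3 := Finset.sum_le_sum (fun q hq => row_attack_bound m n q r
          (fun hh => hnoq q hq hh.symm))
      _ = 3 * D.card := by rw [Finset.sum_const, smul_eq_mul, mul_comm]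
  rw [hRcard] at hbound
  omega
end

section
/- If m ≤ n, then γ(Q_{m×n}) ≥ min{ m, ⌈(m+n−2)/4⌉ }. -/
private lemma card_le_one_of {S : Finset (ℤ × ℤ)} {a : ℤ × ℤ}
    (h : ∀ p ∈ S, p = a) : S.card ≤ 1 := by
  have hsub : S ⊆ {a} := fun p hp => by rw [h p hp]; simp
  simpa using Finset.card_le_card hsub

private lemma card_le_two_of {S : Finset (ℤ × ℤ)} {a b : ℤ × ℤ}
    (h : ∀ p ∈ S, p = a ∨ p = b) : S.card ≤ 2 := by
  have hsub : S ⊆ {a, b} := fun p hp => by rcases h p hp with rfl | rfl <;> simp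
  calc S.card ≤ ({a, b} : Finset (ℤ × ℤ)).card := Finset.card_le_card hsub
    _ ≤ 2 := (Finset.card_insert_le _ _).trans (by simp)

private lemma cover_card_le (D S : Finset (ℤ × ℤ)) (t : ℕ)
    (hdom : ∀ p ∈ S, ∃ q ∈ D, p.1 + p.2 = q.1 + q.2 ∨ p.1 - p.2 = q.1 - q.2)
    (hsum : ∀ s : ℤ, (S.filter (fun p => p.1 + p.2 = s)).card ≤ t)
    (hdiff : ∀ d : ℤ, (S.filter (fun p => p.1 - p.2 = d)).card ≤ t) :
    S.card ≤ D.card * (2 * t) := by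
  classical
  have hsub : S ⊆ D.biUnion (fun q => S.filter
      (fun p => p.1 + p.2 = q.1 + q.2 ∨ p.1 - p.2 = q.1 - q.2)) := by
    intro p hp
    obtain ⟨q, hq, hc⟩ := hdom p hp
    exact Finset.mem_biUnion.mpr ⟨q, hq, Finset.mem_filter.mpr ⟨hp, hc⟩⟩
  refine (Finset.card_le_card hsub).trans ?_
  apply Finset.card_biUnion_le_card_mul
  intro q _
  have hst : (S.filter (fun p => p.1 + p.2 = q.1 + q.2 ∨ p.1 - p.2 = q.1 - q.2))
      ⊆ (S.filter (fun p => p.1 + p.2 = q.1 + q.2)) ∪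
        (S.filter (fun p => p.1 - p.2 = q.1 - q.2)) := by
    rw [← Finset.filter_or]
  refine (Finset.card_le_card hst).trans ?_
  have h1 := hsum (q.1 + q.2)
  have h2 := hdiff (q.1 - q.2)
  have h3 := Finset.card_union_le (S.filter (fun p => p.1 + p.2 = q.1 + q.2))
      (S.filter (fun p => p.1 - p.2 = q.1 - q.2))
  omega

/-- If m ≤ n, then γ(Q_{m×n}) ≥ min { m, ⌈(m+n−2)/4⌉ }. -/
theorem gamma_lower_bound (m n : ℕ) (hmn : m ≤ n) :
    min m ((m + n - 2 + 3) / 4) ≤ gamma m n := by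
  classical
  have hne : {k | ∃ D ⊆ board m n, D.card = k ∧ Dominates (board m n) D}.Nonempty :=
    ⟨(board m n).card, board m n, Finset.Subset.refl _, rfl, fun p hp => Or.inl hp⟩
  unfold gamma
  apply le_csInf hne
  rintro k ⟨D, hD, rfl, hdom⟩
  by_contra hcon
  push_neg at hcon
  rw [lt_min_iff] at hcon
  obtain ⟨hkm, hkq⟩ := hcon
  have hm1 : 1 ≤ m := by omega
  have hn1 : 1 ≤ n := le_trans hm1 hmn
  have hk3 : 4 * D.card + 3 ≤ m + n := by omega
  set QC := D.image Prod.fst with hQCdef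
  set QR := D.image Prod.snd with hQRdef
  set C := Finset.Icc (1 : ℤ) (n : ℤ) \ QC with hCdef
  set R := Finset.Icc (1 : ℤ) (m : ℤ) \ QR with hRdef
  have hCcard : n ≤ C.card + D.card := by
    have h1 : (Finset.Icc (1 : ℤ) (n : ℤ)).card ≤ C.card + QC.card :=
      Finset.card_le_card_sdiff_add_card
    have h2 : QC.card ≤ D.card := Finset.card_image_le
    have h3 : (Finset.Icc (1 : ℤ) (n : ℤ)).card = n := by
      rw [Int.card_Icc]; omega
    omega
  have hRcard : m ≤ R.card + D.card := by
    have h1 : (Finset.Icc (1 : ℤ) (m : ℤ)).card ≤ R.card + QR.card :=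
      Finset.card_le_card_sdiff_add_card
    have h2 : QR.card ≤ D.card := Finset.card_image_le
    have h3 : (Finset.Icc (1 : ℤ) (m : ℤ)).card = m := by
      rw [Int.card_Icc]; omega
    omega
  have hCne : C.Nonempty := Finset.card_pos.mp (by omega)
  have hRne : R.Nonempty := Finset.card_pos.mp (by omega)
  set c1 := C.min' hCne with hc1def
  set c2 := C.max' hCne with hc2def
  set r1 := R.min' hRne with hr1def
  set r2 := R.max' hRne with hr2def
  have hc1C : c1 ∈ C := C.min'_mem hCne
  have hc2C : c2 ∈ C := C.max'_mem hCne
  have hr1R : r1 ∈ R := R.min'_mem hRne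
  have hr2R : r2 ∈ R := R.max'_mem hRne
  have hClo : ∀ x ∈ C, c1 ≤ x := fun x hx => C.min'_le x hx
  have hChi : ∀ x ∈ C, x ≤ c2 := fun x hx => C.le_max' x hx
  have hRlo : ∀ x ∈ R, r1 ≤ x := fun x hx => R.min'_le x hx
  have hRhi : ∀ x ∈ R, x ≤ r2 := fun x hx => R.le_max' x hx
  -- every square with queen-free column and row is dominated along a diagonal
  have hdiag : ∀ p : ℤ × ℤ, p.1 ∈ C → p.2 ∈ R →
      ∃ q ∈ D, p.1 + p.2 = q.1 + q.2 ∨ p.1 - p.2 = q.1 - q.2 := by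
    intro p hp1 hp2
    have hp1' := Finset.mem_sdiff.mp hp1
    have hp2' := Finset.mem_sdiff.mp hp2
    have hpb : p ∈ board m n := Finset.mem_product.mpr ⟨hp1'.1, hp2'.1⟩
    rcases hdom p hpb with hpD | ⟨q, hq, hat⟩
    · exact absurd (Finset.mem_image_of_mem Prod.fst hpD) hp1'.2
    · obtain ⟨hne, hcase⟩ := hat
      rcases hcase with h | h | h
      · exact absurd (Finset.mem_image.mpr ⟨q, hq, h⟩) hp1'.2
      · exact absurd (Finset.mem_image.mpr ⟨q, hq, h⟩) hp2'.2
      · rcases abs_eq_abs.mp h with h' | h'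
        · exact ⟨q, hq, Or.inr (by omega)⟩
        · exact ⟨q, hq, Or.inl (by omega)⟩
  by_cases hrr : r1 = r2
  · -- only one queen-free row
    have hRsub : R ⊆ {r1} := fun x hx =>
      Finset.mem_singleton.mpr (le_antisymm (hrr ▸ hRhi x hx) (hRlo x hx))
    have hR1 : R.card ≤ 1 := by simpa using Finset.card_le_card hRsub
    set S := C ×ˢ ({r1} : Finset ℤ) with hSdef
    have hSmem : ∀ p ∈ S, p.1 ∈ C ∧ p.2 = r1 := by
      intro p hp
      obtain ⟨h1, h2⟩ := Finset.mem_product.mp hp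
      exact ⟨h1, Finset.mem_singleton.mp h2⟩
    have hcov := cover_card_le D S 1
      (fun p hp => hdiag p (hSmem p hp).1 (by rw [(hSmem p hp).2]; exact hr1R))
      (fun s => card_le_one_of (a := (s - r1, r1)) (by
        intro p hp
        obtain ⟨hpS, hps⟩ := Finset.mem_filter.mp hp
        have h2 := (hSmem p hpS).2
        obtain ⟨px, py⟩ := p
        simp only [Prod.mk.injEq] at *
        omega))
      (fun d => card_le_one_of (a := (d + r1, r1)) (by
        intro p hp
        obtain ⟨hpS, hps⟩ := Finset.mem_filter.mp hp
        have h2 := (hSmem p hpS).2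
        obtain ⟨px, py⟩ := p
        simp only [Prod.mk.injEq] at *
        omega))
    have hScard : S.card = C.card := by
      rw [hSdef, Finset.card_product, Finset.card_singleton, mul_one]
    omega
  by_cases hcc : c1 = c2
  · -- only one queen-free column
    have hCsub : C ⊆ {c1} := fun x hx =>
      Finset.mem_singleton.mpr (le_antisymm (hcc ▸ hChi x hx) (hClo x hx))
    have hC1 : C.card ≤ 1 := by simpa using Finset.card_le_card hCsub
    set S := ({c1} : Finset ℤ) ×ˢ R with hSdef
    have hSmem : ∀ p ∈ S, p.1 = c1 ∧ p.2 ∈ R := by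
      intro p hp
      obtain ⟨h1, h2⟩ := Finset.mem_product.mp hp
      exact ⟨Finset.mem_singleton.mp h1, h2⟩
    have hcov := cover_card_le D S 1
      (fun p hp => hdiag p (by rw [(hSmem p hp).1]; exact hc1C) (hSmem p hp).2)
      (fun s => card_le_one_of (a := (c1, s - c1)) (by
        intro p hp
        obtain ⟨hpS, hps⟩ := Finset.mem_filter.mp hp
        have h1 := (hSmem p hpS).1
        obtain ⟨px, py⟩ := p
        simp only [Prod.mk.injEq] at *
        omega))
      (fun d => card_le_one_of (a := (c1, c1 - d)) (by
        intro p hp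
        obtain ⟨hpS, hps⟩ := Finset.mem_filter.mp hp
        have h1 := (hSmem p hpS).1
        obtain ⟨px, py⟩ := p
        simp only [Prod.mk.injEq] at *
        omega))
    have hScard : S.card = R.card := by
      rw [hSdef, Finset.card_product, Finset.card_singleton, one_mul]
    omega
  · -- general case: at least two queen-free rows and columns
    set X := C ×ˢ ({r1, r2} : Finset ℤ) with hXdef
    set Y := ({c1, c2} : Finset ℤ) ×ˢ R with hYdef
    set B' := X ∪ Y with hB'def
    have hBmem : ∀ p ∈ B', p.1 ∈ C ∧ p.2 ∈ R ∧
        (p.1 = c1 ∨ p.1 = c2 ∨ p.2 = r1 ∨ p.2 = r2) := by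
      intro p hp
      rcases Finset.mem_union.mp hp with h | h
      · obtain ⟨h1, h2⟩ := Finset.mem_product.mp h
        rcases Finset.mem_insert.mp h2 with h2 | h2
        · exact ⟨h1, by rw [h2]; exact hr1R, Or.inr (Or.inr (Or.inl h2))⟩
        · have h2 := Finset.mem_singleton.mp h2
          exact ⟨h1, by rw [h2]; exact hr2R, Or.inr (Or.inr (Or.inr h2))⟩
      · obtain ⟨h1, h2⟩ := Finset.mem_product.mp h
        rcases Finset.mem_insert.mp h1 with h1 | h1
        · exact ⟨by rw [h1]; exact hc1C, h2, Or.inl h1⟩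
        · have h1 := Finset.mem_singleton.mp h1
          exact ⟨by rw [h1]; exact hc2C, h2, Or.inr (Or.inl h1)⟩
    have hfibsum : ∀ s : ℤ, (B'.filter (fun p => p.1 + p.2 = s)).card ≤ 2 := by
      intro s
      apply card_le_two_of (a := (s - max r1 (s - c2), max r1 (s - c2)))
        (b := (s - min r2 (s - c1), min r2 (s - c1)))
      intro p hp
      obtain ⟨hpB, hps⟩ := Finset.mem_filter.mp hp
      obtain ⟨h1, h2, h3⟩ := hBmem p hpB
      have hx1 := hClo _ h1
      have hx2 := hChi _ h1
      have hy1 := hRlo _ h2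
      have hy2 := hRhi _ h2
      have hlo := max_choice r1 (s - c2)
      have hlo1 : r1 ≤ max r1 (s - c2) := le_max_left _ _
      have hlo2 : s - c2 ≤ max r1 (s - c2) := le_max_right _ _
      have hhi := min_choice r2 (s - c1)
      have hhi1 : min r2 (s - c1) ≤ r2 := min_le_left _ _
      have hhi2 : min r2 (s - c1) ≤ s - c1 := min_le_right _ _
      obtain ⟨px, py⟩ := p
      simp only [Prod.mk.injEq] at *
      omega
    have hfibdiff : ∀ d : ℤ, (B'.filter (fun p => p.1 - p.2 = d)).card ≤ 2 := by
      intro d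
      apply card_le_two_of (a := (d + max r1 (c1 - d), max r1 (c1 - d)))
        (b := (d + min r2 (c2 - d), min r2 (c2 - d)))
      intro p hp
      obtain ⟨hpB, hps⟩ := Finset.mem_filter.mp hp
      obtain ⟨h1, h2, h3⟩ := hBmem p hpB
      have hx1 := hClo _ h1
      have hx2 := hChi _ h1
      have hy1 := hRlo _ h2
      have hy2 := hRhi _ h2
      have hlo := max_choice r1 (c1 - d)
      have hlo1 : r1 ≤ max r1 (c1 - d) := le_max_left _ _
      have hlo2 : c1 - d ≤ max r1 (c1 - d) := le_max_right _ _
      have hhi := min_choice r2 (c2 - d)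
      have hhi1 : min r2 (c2 - d) ≤ r2 := min_le_left _ _
      have hhi2 : min r2 (c2 - d) ≤ c2 - d := min_le_right _ _
      obtain ⟨px, py⟩ := p
      simp only [Prod.mk.injEq] at *
      omega
    have hBcard := cover_card_le D B' 2
      (fun p hp => hdiag p (hBmem p hp).1 (hBmem p hp).2.1) hfibsum hfibdiff
    have hXcard : X.card = C.card * 2 := by
      rw [hXdef, Finset.card_product, Finset.card_insert_of_notMem (by simp [hrr]),
        Finset.card_singleton]
    have hYcard : Y.card = 2 * R.card := by
      rw [hYdef, Finset.card_product, Finset.card_insert_of_notMem (by simp [hcc]),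
        Finset.card_singleton]
    have hIE := Finset.card_union_add_card_inter X Y
    have hint : (X ∩ Y).card ≤ 4 := by
      have hsub : X ∩ Y ⊆ ({c1, c2} : Finset ℤ) ×ˢ ({r1, r2} : Finset ℤ) := by
        intro p hp
        obtain ⟨hX, hY⟩ := Finset.mem_inter.mp hp
        exact Finset.mem_product.mpr ⟨(Finset.mem_product.mp hY).1,
          (Finset.mem_product.mp hX).2⟩
      have h1 : ({c1, c2} : Finset ℤ).card ≤ 2 := (Finset.card_insert_le _ _).trans (by simp)
      have h2 : ({r1, r2} : Finset ℤ).card ≤ 2 := (Finset.card_insert_le _ _).trans (by simp)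
      calc (X ∩ Y).card ≤ _ := Finset.card_le_card hsub
        _ = _ := Finset.card_product _ _
        _ ≤ 4 := Nat.mul_le_mul h1 h2
    have hB'big : B'.card + (X ∩ Y).card = X.card + Y.card := hIE
    omega
end

section
/- Suppose m ≤ n < 3m+2 and γ(Q_{m×n}) = (m+n−2)/4. Then every minimum dominating set of Q_{m×n} is independent (no two of its squares share a row, column, or diagonal). -/
open Finset

/-- If m ≤ n < 3m+2 and γ(Q_{m×n}) = (m+n−2)/4, then every minimum dominating set
of Q_{m×n} is independent: no two of its squares share a row, column, or diagonal. -/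
theorem min_dominating_independent (m n : ℕ) (hm : 1 ≤ m) (hmn : m ≤ n)
    (hn : n < 3 * m + 2) (hγ : 4 * gamma m n = m + n - 2) :
    ∀ D ⊆ board m n, Dominates (board m n) D → D.card = gamma m n →
      ∀ p ∈ D, ∀ q ∈ D, ¬ attacks p q := by
  classical
  intro D hDb hDom hcard p hp q hq hatt
  have hmn' : (m:ℤ) ≤ (n:ℤ) := by exact_mod_cast hmn
  have hm1 : (1 : ℤ) ≤ (m:ℤ) := by exact_mod_cast hm
  have hn1 : (1 : ℤ) ≤ (n:ℤ) := le_trans hm1 hmn'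
  -- D is nonempty
  have hDne : D.Nonempty := by
    have hb : ((1 : ℤ), (1 : ℤ)) ∈ board m n := by
      simp only [board, Finset.mem_product, Finset.mem_Icc]
      exact ⟨⟨le_refl 1, hn1⟩, ⟨le_refl 1, hm1⟩⟩
    rcases hDom _ hb with h | ⟨u, hu, _⟩
    · exact ⟨_, h⟩
    · exact ⟨u, hu⟩
  have hK1 : 1 ≤ D.card := Finset.card_pos.mpr hDne
  have hKnat : 4 * D.card + 2 = m + n := by
    rw [hcard]; omega
  have hKZ : 4 * (D.card : ℤ) + 2 = (m:ℤ) + (n:ℤ) := by exact_mod_cast hKnat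
  have hKM : (D.card : ℤ) < (m:ℤ) := by
    have h3 : (n:ℤ) < 3 * (m:ℤ) + 2 := by exact_mod_cast hn
    linarith
  have hKMnat : D.card < m := by exact_mod_cast hKM
  -- occupied lines
  set Cs : Finset ℤ := D.image (fun p => p.1) with hCs
  set Rs : Finset ℤ := D.image (fun p => p.2) with hRs
  set Ss : Finset ℤ := D.image (fun p => p.1 + p.2) with hSs
  set Gs : Finset ℤ := D.image (fun p => p.1 - p.2) with hGs
  have hCsK : Cs.card ≤ D.card := Finset.card_image_le
  have hRsK : Rs.card ≤ D.card := Finset.card_image_le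
  have hSsK : Ss.card ≤ D.card := Finset.card_image_le
  have hGsK : Gs.card ≤ D.card := Finset.card_image_le
  have cardIccM : (Finset.Icc (1:ℤ) (m:ℤ)).card = m := by
    rw [Int.card_Icc]; omega
  have cardIccN : (Finset.Icc (1:ℤ) (n:ℤ)).card = n := by
    rw [Int.card_Icc]; omega
  -- unoccupied rows
  set V : Finset ℤ := Finset.Icc (1:ℤ) (m:ℤ) \ Rs with hV
  have hVcard : m - Rs.card ≤ V.card := by
    have h1 := Finset.le_card_sdiff Rs (Finset.Icc (1:ℤ) (m:ℤ))
    rw [cardIccM, ← hV] at h1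
    exact h1
  have hVne : V.Nonempty := by
    apply Finset.card_pos.mp; omega
  obtain ⟨r, hrV⟩ := hVne
  have hrIcc : r ∈ Finset.Icc (1:ℤ) (m:ℤ) := (Finset.mem_sdiff.mp hrV).1
  have hrRs : r ∉ Rs := (Finset.mem_sdiff.mp hrV).2
  -- Claim 1 : n ≤ |Cs| + |Ss| + |Gs|
  have claim1 : n ≤ Cs.card + Ss.card + Gs.card := by
    set φ : ℤ → ℕ × ℤ := fun x =>
      if x ∈ Cs then (0, x) else if x + r ∈ Ss then (2, x + r) else (3, x - r) with hφ
    set T : Finset (ℕ × ℤ) :=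
      ({0} ×ˢ Cs) ∪ (({2} ×ˢ Ss) ∪ ({3} ×ˢ Gs)) with hT
    have hmaps : ∀ x ∈ Finset.Icc (1:ℤ) (n:ℤ), φ x ∈ T := by
      intro x hx
      by_cases h1 : x ∈ Cs
      · rw [hφ]
        simp only [if_pos h1]
        exact Finset.mem_union.mpr (Or.inl (Finset.mem_product.mpr ⟨by simp, h1⟩))
      · by_cases h2 : x + r ∈ Ss
        · rw [hφ]
          simp only [if_neg h1, if_pos h2]
          exact Finset.mem_union.mpr (Or.inr (Finset.mem_union.mpr (Or.inl
            (Finset.mem_product.mpr ⟨by simp, h2⟩))))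
        · have hxr : (x, r) ∈ board m n := by
            simp only [board, Finset.mem_product]
            exact ⟨hx, hrIcc⟩
          have hG : x - r ∈ Gs := by
            rcases hDom _ hxr with hmem | ⟨u, hu, hne, hor⟩
            · exact absurd (Finset.mem_image_of_mem (fun p => p.1) hmem) h1
            · rcases hor with hcol | hrow | habs
              · have hmem2 : u.1 ∈ Cs := Finset.mem_image_of_mem _ hu
                have hcol' : u.1 = x := hcol
                exact absurd (hcol' ▸ hmem2) h1
              · have hmem2 : u.2 ∈ Rs := Finset.mem_image_of_mem _ hu
                have hrow' : u.2 = r := hrow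
                exact absurd (hrow' ▸ hmem2) hrRs
              · rcases abs_eq_abs.mp habs with he | he
                · have he2 : u.1 - u.2 = x - r := by
                    have h5 : u.1 - x = u.2 - r := by simpa using he
                    linarith
                  have hmem2 : u.1 - u.2 ∈ Gs := Finset.mem_image_of_mem _ hu
                  exact he2 ▸ hmem2
                · have he2 : u.1 + u.2 = x + r := by
                    have h5 : u.1 - x = -(u.2 - r) := by simpa using he
                    linarith
                  have hmem2 : u.1 + u.2 ∈ Ss := Finset.mem_image_of_mem _ hu
                  exact absurd (he2 ▸ hmem2) h2
          rw [hφ]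
          simp only [if_neg h1, if_neg h2]
          exact Finset.mem_union.mpr (Or.inr (Finset.mem_union.mpr (Or.inr
            (Finset.mem_product.mpr ⟨by simp, hG⟩))))
    have hinj : Set.InjOn φ (Finset.Icc (1:ℤ) (n:ℤ)) := by
      intro x hx y hy hxy
      rw [hφ] at hxy
      simp only at hxy
      split_ifs at hxy <;>
        simp only [Prod.mk.injEq] at hxy <;> omega
    have hcard1 : (Finset.Icc (1:ℤ) (n:ℤ)).card ≤ T.card :=
      Finset.card_le_card_of_injOn φ hmaps hinj
    have hTcard : T.card ≤ Cs.card + Ss.card + Gs.card := by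
      have u1 := Finset.card_union_le (({0} : Finset ℕ) ×ˢ Cs)
        ((({2} : Finset ℕ) ×ˢ Ss) ∪ (({3} : Finset ℕ) ×ˢ Gs))
      have u2 := Finset.card_union_le (({2} : Finset ℕ) ×ˢ Ss) (({3} : Finset ℕ) ×ˢ Gs)
      have e1 : ((({0} : Finset ℕ)) ×ˢ Cs).card = Cs.card := by
        rw [Finset.card_product]; simp
      have e2 : ((({2} : Finset ℕ)) ×ˢ Ss).card = Ss.card := by
        rw [Finset.card_product]; simp
      have e3 : ((({3} : Finset ℕ)) ×ˢ Gs).card = Gs.card := by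
        rw [Finset.card_product]; simp
      rw [← hT] at u1
      omega
    rw [cardIccN] at hcard1
    omega
  -- consequences : m ≥ K + 2 and n ≥ K + 2
  have hmK2 : D.card + 2 ≤ m := by
    have hcl : (n : ℤ) ≤ (Cs.card : ℤ) + Ss.card + Gs.card := by exact_mod_cast claim1
    have hC' : (Cs.card : ℤ) ≤ D.card := by exact_mod_cast hCsK
    have hS' : (Ss.card : ℤ) ≤ D.card := by exact_mod_cast hSsK
    have hG' : (Gs.card : ℤ) ≤ D.card := by exact_mod_cast hGsK
    have hfin : (D.card : ℤ) + 2 ≤ (m:ℤ) := by linarith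
    exact_mod_cast hfin
  have hnK2 : D.card + 2 ≤ n := le_trans hmK2 hmn
  -- extreme unoccupied columns
  set U : Finset ℤ := Finset.Icc (1:ℤ) (n:ℤ) \ Cs with hU
  have hUcard : 2 ≤ U.card := by
    have h1 := Finset.le_card_sdiff Cs (Finset.Icc (1:ℤ) (n:ℤ))
    rw [cardIccN, ← hU] at h1
    omega
  have hUne : U.Nonempty := Finset.card_pos.mp (by omega)
  set a : ℤ := U.min' hUne with ha
  set b : ℤ := U.max' hUne with hb
  have hab : a < b := Finset.min'_lt_max'_of_card U (by omega)
  have haU : a ∈ U := Finset.min'_mem U hUne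
  have hbU : b ∈ U := Finset.max'_mem U hUne
  have haCs : a ∉ Cs := (Finset.mem_sdiff.mp haU).2
  have hbCs : b ∉ Cs := (Finset.mem_sdiff.mp hbU).2
  have ha1 : 1 ≤ a := (Finset.mem_Icc.mp (Finset.mem_sdiff.mp haU).1).1
  have hbN : b ≤ (n:ℤ) := (Finset.mem_Icc.mp (Finset.mem_sdiff.mp hbU).1).2
  have houterC : ∀ x : ℤ, 1 ≤ x → x ≤ (n:ℤ) → (x < a ∨ b < x) → x ∈ Cs := by
    intro x hx1 hxN hxout
    by_contra hxCs
    have hxU : x ∈ U := Finset.mem_sdiff.mpr ⟨Finset.mem_Icc.mpr ⟨hx1, hxN⟩, hxCs⟩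
    rcases hxout with h | h
    · exact absurd (Finset.min'_le U x hxU) (by omega)
    · exact absurd (Finset.le_max' U x hxU) (by omega)
  -- extreme unoccupied rows
  have hVcard2 : 2 ≤ V.card := by omega
  have hVne2 : V.Nonempty := Finset.card_pos.mp (by omega)
  set c : ℤ := V.min' hVne2 with hc
  set d : ℤ := V.max' hVne2 with hd
  have hcd : c < d := Finset.min'_lt_max'_of_card V (by omega)
  have hcV : c ∈ V := Finset.min'_mem V hVne2
  have hdV : d ∈ V := Finset.max'_mem V hVne2
  have hcRs : c ∉ Rs := (Finset.mem_sdiff.mp hcV).2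
  have hdRs : d ∉ Rs := (Finset.mem_sdiff.mp hdV).2
  have hc1 : 1 ≤ c := (Finset.mem_Icc.mp (Finset.mem_sdiff.mp hcV).1).1
  have hdM : d ≤ (m:ℤ) := (Finset.mem_Icc.mp (Finset.mem_sdiff.mp hdV).1).2
  have houterR : ∀ y : ℤ, 1 ≤ y → y ≤ (m:ℤ) → (y < c ∨ d < y) → y ∈ Rs := by
    intro y hy1 hyM hyout
    by_contra hyRs
    have hyV : y ∈ V := Finset.mem_sdiff.mpr ⟨Finset.mem_Icc.mpr ⟨hy1, hyM⟩, hyRs⟩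
    rcases hyout with h | h
    · exact absurd (Finset.min'_le V y hyV) (by omega)
    · exact absurd (Finset.le_max' V y hyV) (by omega)
  -- lower bound on |Cs|
  have hCsLB : (a - 1) + ((n:ℤ) - b) + ((Cs ∩ Finset.Ioo a b).card : ℤ) ≤ (Cs.card : ℤ) := by
    have hsub : (Finset.Ico (1:ℤ) a ∪ (Finset.Ioc b (n:ℤ) ∪ Cs ∩ Finset.Ioo a b)) ⊆ Cs := by
      intro x hx
      rcases Finset.mem_union.mp hx with h | h
      · have h' := Finset.mem_Ico.mp h
        exact houterC x h'.1 (by omega) (Or.inl h'.2)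
      · rcases Finset.mem_union.mp h with h' | h'
        · have h'' := Finset.mem_Ioc.mp h'
          exact houterC x (by omega) h''.2 (Or.inr h''.1)
        · exact (Finset.mem_inter.mp h').1
    have hdisj1 : Disjoint (Finset.Ioc b (n:ℤ)) (Cs ∩ Finset.Ioo a b) := by
      apply Finset.disjoint_left.mpr
      intro x hx hx'
      have h1 := Finset.mem_Ioc.mp hx
      have h2 := Finset.mem_Ioo.mp (Finset.mem_inter.mp hx').2
      omega
    have hdisj2 : Disjoint (Finset.Ico (1:ℤ) a) (Finset.Ioc b (n:ℤ) ∪ Cs ∩ Finset.Ioo a b) := by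
      apply Finset.disjoint_left.mpr
      intro x hx hx'
      have h1 := Finset.mem_Ico.mp hx
      rcases Finset.mem_union.mp hx' with h | h
      · have h2 := Finset.mem_Ioc.mp h; omega
      · have h2 := Finset.mem_Ioo.mp (Finset.mem_inter.mp h).2; omega
    have hcards := Finset.card_le_card hsub
    rw [Finset.card_union_of_disjoint hdisj2, Finset.card_union_of_disjoint hdisj1,
      Int.card_Ico, Int.card_Ioc] at hcards
    omega
  -- lower bound on |Rs|
  have hRsLB : (c - 1) + ((m:ℤ) - d) + ((Rs ∩ Finset.Ioo c d).card : ℤ) ≤ (Rs.card : ℤ) := by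
    have hsub : (Finset.Ico (1:ℤ) c ∪ (Finset.Ioc d (m:ℤ) ∪ Rs ∩ Finset.Ioo c d)) ⊆ Rs := by
      intro y hy
      rcases Finset.mem_union.mp hy with h | h
      · have h' := Finset.mem_Ico.mp h
        exact houterR y h'.1 (by omega) (Or.inl h'.2)
      · rcases Finset.mem_union.mp h with h' | h'
        · have h'' := Finset.mem_Ioc.mp h'
          exact houterR y (by omega) h''.2 (Or.inr h''.1)
        · exact (Finset.mem_inter.mp h').1
    have hdisj1 : Disjoint (Finset.Ioc d (m:ℤ)) (Rs ∩ Finset.Ioo c d) := by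
      apply Finset.disjoint_left.mpr
      intro y hy hy'
      have h1 := Finset.mem_Ioc.mp hy
      have h2 := Finset.mem_Ioo.mp (Finset.mem_inter.mp hy').2
      omega
    have hdisj2 : Disjoint (Finset.Ico (1:ℤ) c) (Finset.Ioc d (m:ℤ) ∪ Rs ∩ Finset.Ioo c d) := by
      apply Finset.disjoint_left.mpr
      intro y hy hy'
      have h1 := Finset.mem_Ico.mp hy
      rcases Finset.mem_union.mp hy' with h | h
      · have h2 := Finset.mem_Ioc.mp h; omega
      · have h2 := Finset.mem_Ioo.mp (Finset.mem_inter.mp h).2; omega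
    have hcards := Finset.card_le_card hsub
    rw [Finset.card_union_of_disjoint hdisj2, Finset.card_union_of_disjoint hdisj1,
      Int.card_Ico, Int.card_Ioc] at hcards
    omega
  -- the border of the rectangle [a,b] × [c,d]
  set B : Finset (ℤ × ℤ) :=
    ((({a, b} : Finset ℤ) ×ˢ Finset.Icc c d) ∪ (Finset.Ioo a b ×ˢ ({c, d} : Finset ℤ)))
    with hB
  have hmemB : ∀ p : ℤ × ℤ, p ∈ B ↔
      (((p.1 = a ∨ p.1 = b) ∧ (c ≤ p.2 ∧ p.2 ≤ d)) ∨
        ((a < p.1 ∧ p.1 < b) ∧ (p.2 = c ∨ p.2 = d))) := by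
    intro p
    rw [hB]
    simp [Finset.mem_union, Finset.mem_product, Finset.mem_insert, Finset.mem_singleton,
      Finset.mem_Icc, Finset.mem_Ioo]
  have hcard_ab : (({a, b} : Finset ℤ)).card = 2 := by
    rw [Finset.card_insert_of_notMem (by simp; omega)]
    simp
  have hcard_cd : (({c, d} : Finset ℤ)).card = 2 := by
    rw [Finset.card_insert_of_notMem (by simp; omega)]
    simp
  have hBcard : (B.card : ℤ) = 2 * (d - c) + 2 * (b - a) := by
    have hdisj : Disjoint ((({a, b} : Finset ℤ) ×ˢ Finset.Icc c d))
        (Finset.Ioo a b ×ˢ ({c, d} : Finset ℤ)) := by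
      apply Finset.disjoint_left.mpr
      intro p hp1 hp2
      have h1 := Finset.mem_product.mp hp1
      have h2 := Finset.mem_product.mp hp2
      have h3 := Finset.mem_Ioo.mp h2.1
      have h4 : p.1 = a ∨ p.1 = b := by
        have := h1.1; simp [Finset.mem_insert, Finset.mem_singleton] at this; exact this
      omega
    rw [hB, Finset.card_union_of_disjoint hdisj, Finset.card_product, Finset.card_product,
      hcard_ab, hcard_cd, Int.card_Icc, Int.card_Ioo]
    omega
  have hBboard : ∀ p ∈ B, p ∈ board m n := by
    intro p hpB
    rw [board, Finset.mem_product, Finset.mem_Icc, Finset.mem_Icc]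
    rcases (hmemB p).mp hpB with ⟨h1 | h1, h2, h3⟩ | ⟨⟨h1, h2⟩, h3 | h3⟩ <;>
      exact ⟨⟨by omega, by omega⟩, by omega, by omega⟩
  -- the assignment of occupied lines to border squares
  set ψ : ℤ × ℤ → ℕ × ℤ := fun p =>
    if p.1 ∈ Cs then (0, p.1)
    else if p.2 ∈ Rs then (1, p.2)
    else if p.1 + p.2 ∈ Ss then (2, p.1 + p.2)
    else (3, p.1 - p.2) with hψ
  set TT : Finset (ℕ × ℤ) :=
    ({0} ×ˢ (Cs ∩ Finset.Ioo a b)) ∪ (({1} ×ˢ (Rs ∩ Finset.Ioo c d)) ∪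
      (({2} ×ˢ Ss) ∪ ({3} ×ˢ Gs))) with hTT
  have hmapsB : ∀ p ∈ B, ψ p ∈ TT := by
    intro p hpB
    by_cases h1 : p.1 ∈ Cs
    · have hIoo : a < p.1 ∧ p.1 < b := by
        rcases (hmemB p).mp hpB with ⟨h | h, _⟩ | ⟨⟨h2, h3⟩, _⟩
        · exact absurd (h ▸ h1) haCs
        · exact absurd (h ▸ h1) hbCs
        · exact ⟨h2, h3⟩
      rw [hψ]
      simp only [if_pos h1]
      exact Finset.mem_union.mpr (Or.inl (Finset.mem_product.mpr
        ⟨by simp, Finset.mem_inter.mpr ⟨h1, Finset.mem_Ioo.mpr hIoo⟩⟩))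
    · by_cases h2 : p.2 ∈ Rs
      · have hIoo : c < p.2 ∧ p.2 < d := by
          rcases (hmemB p).mp hpB with ⟨_, hc2, hd2⟩ | ⟨_, h | h⟩
          · have hne1 : p.2 ≠ c := fun hh => hcRs (hh ▸ h2)
            have hne2 : p.2 ≠ d := fun hh => hdRs (hh ▸ h2)
            omega
          · exact absurd (h ▸ h2) hcRs
          · exact absurd (h ▸ h2) hdRs
        rw [hψ]
        simp only [if_neg h1, if_pos h2]
        exact Finset.mem_union.mpr (Or.inr (Finset.mem_union.mpr (Or.inl
          (Finset.mem_product.mpr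
            ⟨by simp, Finset.mem_inter.mpr ⟨h2, Finset.mem_Ioo.mpr hIoo⟩⟩))))
      · by_cases h3 : p.1 + p.2 ∈ Ss
        · rw [hψ]
          simp only [if_neg h1, if_neg h2, if_pos h3]
          exact Finset.mem_union.mpr (Or.inr (Finset.mem_union.mpr (Or.inr
            (Finset.mem_union.mpr (Or.inl (Finset.mem_product.mpr ⟨by simp, h3⟩))))))
        · have hG : p.1 - p.2 ∈ Gs := by
            rcases hDom _ (hBboard p hpB) with hmem | ⟨u, hu, hne, hor⟩
            · exact absurd (Finset.mem_image_of_mem (fun p => p.1) hmem) h1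
            · rcases hor with hcol | hrow | habs
              · have hmem2 : u.1 ∈ Cs := Finset.mem_image_of_mem _ hu
                exact absurd (hcol ▸ hmem2) h1
              · have hmem2 : u.2 ∈ Rs := Finset.mem_image_of_mem _ hu
                exact absurd (hrow ▸ hmem2) h2
              · rcases abs_eq_abs.mp habs with he | he
                · have he2 : u.1 - u.2 = p.1 - p.2 := by linarith
                  have hmem2 : u.1 - u.2 ∈ Gs := Finset.mem_image_of_mem _ hu
                  exact he2 ▸ hmem2
                · have he2 : u.1 + u.2 = p.1 + p.2 := by linarith
                  have hmem2 : u.1 + u.2 ∈ Ss := Finset.mem_image_of_mem _ hu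
                  exact absurd (he2 ▸ hmem2) h3
          rw [hψ]
          simp only [if_neg h1, if_neg h2, if_neg h3]
          exact Finset.mem_union.mpr (Or.inr (Finset.mem_union.mpr (Or.inr
            (Finset.mem_union.mpr (Or.inr (Finset.mem_product.mpr ⟨by simp, hG⟩))))))
  -- every fiber of ψ on B has at most two elements
  have hfib : ∀ l ∈ B.image ψ, (B.filter fun p => ψ p = l).card ≤ 2 := by
    intro l hl
    obtain ⟨t, v⟩ := l
    obtain ⟨p₀, hp₀B, hψ₀⟩ := Finset.mem_image.mp hl
    have hfil : ∀ s : Finset (ℤ × ℤ), (B.filter fun p => ψ p = (t, v)) ⊆ s →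
        (B.filter fun p => ψ p = (t, v)).card ≤ s.card := fun s hs => Finset.card_le_card hs
    rw [hψ] at hψ₀
    simp only at hψ₀
    split_ifs at hψ₀ with g1 g2 g3
    -- tag 0 : a column
    · have ht : t = 0 := (Prod.mk.injEq _ _ _ _ ▸ hψ₀).1.symm
      have hv : p₀.1 = v := (Prod.mk.injEq _ _ _ _ ▸ hψ₀).2
      have hvC : v ∈ Cs := hv ▸ g1
      have hsub : (B.filter fun p => ψ p = (t, v)) ⊆ {(v, c), (v, d)} := by
        intro p hpf
        obtain ⟨hpB, hpl⟩ := Finset.mem_filter.mp hpf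
        rw [hψ] at hpl
        simp only at hpl
        split_ifs at hpl with f1 f2 f3 <;>
          simp only [Prod.mk.injEq, ht] at hpl
        · -- p.1 = v
          have hp1 : p.1 = v := hpl.2
          have hva : v ≠ a := fun hh => haCs (hh ▸ hvC)
          have hvb : v ≠ b := fun hh => hbCs (hh ▸ hvC)
          rcases (hmemB p).mp hpB with ⟨h | h, _⟩ | ⟨_, h | h⟩
          · omega
          · omega
          · exact Finset.mem_insert.mpr (Or.inl (Prod.ext_iff.mpr ⟨hp1, h⟩))
          · exact Finset.mem_insert.mpr (Or.inr (Finset.mem_singleton.mpr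
              (Prod.ext_iff.mpr ⟨hp1, h⟩)))
        · omega
        · omega
        · omega
      exact le_trans (hfil _ hsub) (le_trans (Finset.card_insert_le _ _) (by simp))
    -- tag 1 : a row
    · have ht : t = 1 := (Prod.mk.injEq _ _ _ _ ▸ hψ₀).1.symm
      have hv : p₀.2 = v := (Prod.mk.injEq _ _ _ _ ▸ hψ₀).2
      have hvR : v ∈ Rs := hv ▸ g2
      have hsub : (B.filter fun p => ψ p = (t, v)) ⊆ {(a, v), (b, v)} := by
        intro p hpf
        obtain ⟨hpB, hpl⟩ := Finset.mem_filter.mp hpf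
        rw [hψ] at hpl
        simp only at hpl
        split_ifs at hpl with f1 f2 f3 <;>
          simp only [Prod.mk.injEq, ht] at hpl
        · omega
        · -- p.2 = v
          have hp2 : p.2 = v := hpl.2
          have hvc : v ≠ c := fun hh => hcRs (hh ▸ hvR)
          have hvd : v ≠ d := fun hh => hdRs (hh ▸ hvR)
          rcases (hmemB p).mp hpB with ⟨h | h, _⟩ | ⟨_, h | h⟩
          · exact Finset.mem_insert.mpr (Or.inl (Prod.ext_iff.mpr ⟨h, hp2⟩))
          · exact Finset.mem_insert.mpr (Or.inr (Finset.mem_singleton.mpr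
              (Prod.ext_iff.mpr ⟨h, hp2⟩)))
          · omega
          · omega
        · omega
        · omega
      exact le_trans (hfil _ hsub) (le_trans (Finset.card_insert_le _ _) (by simp))
    -- tag 2 : a sum diagonal
    · have ht : t = 2 := (Prod.mk.injEq _ _ _ _ ▸ hψ₀).1.symm
      have hsub : (B.filter fun p => ψ p = (t, v)) ⊆
          {(max a (v - d), v - max a (v - d)), (min b (v - c), v - min b (v - c))} := by
        intro p hpf
        obtain ⟨hpB, hpl⟩ := Finset.mem_filter.mp hpf
        rw [hψ] at hpl
        simp only at hpl
        split_ifs at hpl with f1 f2 f3 <;>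
          simp only [Prod.mk.injEq, ht] at hpl
        · omega
        · omega
        · -- p.1 + p.2 = v
          have hpv : p.1 + p.2 = v := hpl.2
          have hkey : p.1 = max a (v - d) ∨ p.1 = min b (v - c) := by
            rcases (hmemB p).mp hpB with ⟨h | h, h2, h3⟩ | ⟨⟨h1', h2'⟩, h | h⟩
            · left; rw [max_eq_left (by omega)]; omega
            · right; rw [min_eq_left (by omega)]; omega
            · right; rw [min_eq_right (by omega)]; omega
            · left; rw [max_eq_right (by omega)]; omega
          rcases hkey with h | h
          · exact Finset.mem_insert.mpr (Or.inl (Prod.ext_iff.mpr ⟨h, by omega⟩))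
          · exact Finset.mem_insert.mpr (Or.inr (Finset.mem_singleton.mpr
              (Prod.ext_iff.mpr ⟨h, by omega⟩)))
        · omega
      exact le_trans (hfil _ hsub) (le_trans (Finset.card_insert_le _ _) (by simp))
    -- tag 3 : a difference diagonal
    · have ht : t = 3 := (Prod.mk.injEq _ _ _ _ ▸ hψ₀).1.symm
      have hsub : (B.filter fun p => ψ p = (t, v)) ⊆
          {(max a (v + c), max a (v + c) - v), (min b (v + d), min b (v + d) - v)} := by
        intro p hpf
        obtain ⟨hpB, hpl⟩ := Finset.mem_filter.mp hpf
        rw [hψ] at hpl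
        simp only at hpl
        split_ifs at hpl with f1 f2 f3 <;>
          simp only [Prod.mk.injEq, ht] at hpl
        · omega
        · omega
        · omega
        · -- p.1 - p.2 = v
          have hpv : p.1 - p.2 = v := hpl.2
          have hkey : p.1 = max a (v + c) ∨ p.1 = min b (v + d) := by
            rcases (hmemB p).mp hpB with ⟨h | h, h2, h3⟩ | ⟨⟨h1', h2'⟩, h | h⟩
            · left; rw [max_eq_left (by omega)]; omega
            · right; rw [min_eq_left (by omega)]; omega
            · left; rw [max_eq_right (by omega)]; omega
            · right; rw [min_eq_right (by omega)]; omega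
          rcases hkey with h | h
          · exact Finset.mem_insert.mpr (Or.inl (Prod.ext_iff.mpr ⟨h, by omega⟩))
          · exact Finset.mem_insert.mpr (Or.inr (Finset.mem_singleton.mpr
              (Prod.ext_iff.mpr ⟨h, by omega⟩)))
      exact le_trans (hfil _ hsub) (le_trans (Finset.card_insert_le _ _) (by simp))
  -- the double counting
  have hcount : B.card ≤ 2 * (B.image ψ).card :=
    Finset.card_le_mul_card_image B 2 hfib
  have himg : B.image ψ ⊆ TT := by
    intro l hl
    obtain ⟨p, hpB, hpl⟩ := Finset.mem_image.mp hl
    exact hpl ▸ hmapsB p hpB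
  have hTTcard : TT.card ≤
      (Cs ∩ Finset.Ioo a b).card + (Rs ∩ Finset.Ioo c d).card + Ss.card + Gs.card := by
    have u1 := Finset.card_union_le (({0} : Finset ℕ) ×ˢ (Cs ∩ Finset.Ioo a b))
      ((({1} : Finset ℕ) ×ˢ (Rs ∩ Finset.Ioo c d)) ∪
        ((({2} : Finset ℕ) ×ˢ Ss) ∪ (({3} : Finset ℕ) ×ˢ Gs)))
    have u2 := Finset.card_union_le (({1} : Finset ℕ) ×ˢ (Rs ∩ Finset.Ioo c d))
      ((({2} : Finset ℕ) ×ˢ Ss) ∪ (({3} : Finset ℕ) ×ˢ Gs))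
    have u3 := Finset.card_union_le (({2} : Finset ℕ) ×ˢ Ss) (({3} : Finset ℕ) ×ˢ Gs)
    have e1 : ((({0} : Finset ℕ)) ×ˢ (Cs ∩ Finset.Ioo a b)).card
        = (Cs ∩ Finset.Ioo a b).card := by rw [Finset.card_product]; simp
    have e2 : ((({1} : Finset ℕ)) ×ˢ (Rs ∩ Finset.Ioo c d)).card
        = (Rs ∩ Finset.Ioo c d).card := by rw [Finset.card_product]; simp
    have e3 : ((({2} : Finset ℕ)) ×ˢ Ss).card = Ss.card := by
      rw [Finset.card_product]; simp
    have e4 : ((({3} : Finset ℕ)) ×ˢ Gs).card = Gs.card := by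
      rw [Finset.card_product]; simp
    rw [← hTT] at u1
    omega
  have himgcard : (B.image ψ).card ≤ TT.card := Finset.card_le_card himg
  -- put everything together over ℤ
  have hmain : (m : ℤ) + (n : ℤ) - 2 ≤
      (Cs.card : ℤ) + (Rs.card : ℤ) + (Ss.card : ℤ) + (Gs.card : ℤ) := by
    have hBZ : (B.card : ℤ) ≤ 2 * (((Cs ∩ Finset.Ioo a b).card : ℤ)
        + ((Rs ∩ Finset.Ioo c d).card : ℤ) + (Ss.card : ℤ) + (Gs.card : ℤ)) := by
      have : B.card ≤ 2 * ((Cs ∩ Finset.Ioo a b).card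
          + (Rs ∩ Finset.Ioo c d).card + Ss.card + Gs.card) := by omega
      exact_mod_cast this
    rw [hBcard] at hBZ
    omega
  have hCK : (Cs.card : ℤ) ≤ (D.card : ℤ) := by exact_mod_cast hCsK
  have hRK : (Rs.card : ℤ) ≤ (D.card : ℤ) := by exact_mod_cast hRsK
  have hSK : (Ss.card : ℤ) ≤ (D.card : ℤ) := by exact_mod_cast hSsK
  have hGK : (Gs.card : ℤ) ≤ (D.card : ℤ) := by exact_mod_cast hGsK
  have hCeq : Cs.card = D.card := by
    have : (Cs.card : ℤ) = (D.card : ℤ) := by omega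
    exact_mod_cast this
  have hReq : Rs.card = D.card := by
    have : (Rs.card : ℤ) = (D.card : ℤ) := by omega
    exact_mod_cast this
  have hSeq : Ss.card = D.card := by
    have : (Ss.card : ℤ) = (D.card : ℤ) := by omega
    exact_mod_cast this
  have hGeq : Gs.card = D.card := by
    have : (Gs.card : ℤ) = (D.card : ℤ) := by omega
    exact_mod_cast this
  -- injectivity of the four line maps on D
  have hinjC : Set.InjOn (fun p : ℤ × ℤ => p.1) ↑D :=
    Finset.card_image_iff.mp (by rw [← hCs]; exact hCeq)
  have hinjR : Set.InjOn (fun p : ℤ × ℤ => p.2) ↑D :=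
    Finset.card_image_iff.mp (by rw [← hRs]; exact hReq)
  have hinjS : Set.InjOn (fun p : ℤ × ℤ => p.1 + p.2) ↑D :=
    Finset.card_image_iff.mp (by rw [← hSs]; exact hSeq)
  have hinjG : Set.InjOn (fun p : ℤ × ℤ => p.1 - p.2) ↑D :=
    Finset.card_image_iff.mp (by rw [← hGs]; exact hGeq)
  -- conclude
  obtain ⟨hne, hor⟩ := hatt
  rcases hor with h | h | h
  · exact hne (hinjC (Finset.mem_coe.mpr hp) (Finset.mem_coe.mpr hq) h)
  · exact hne (hinjR (Finset.mem_coe.mpr hp) (Finset.mem_coe.mpr hq) h)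
  · rcases abs_eq_abs.mp h with h' | h'
    · exact hne (hinjG (Finset.mem_coe.mpr hp) (Finset.mem_coe.mpr hq) (by
        show p.1 - p.2 = q.1 - q.2
        linarith))
    · exact hne (hinjS (Finset.mem_coe.mpr hp) (Finset.mem_coe.mpr hq) (by
        show p.1 + p.2 = q.1 + q.2
        linarith))
end

section
/- If a dominating set D of the queens graph Q_{m×n} contains a foursome F centered at (x,y), then the set D' obtained by replacing F with its horizontal reflection F' is also a dominating set of Q_{m×n} of the same size as D. -/
/-- Queens adjacency on rational coordinates. -/
def attacksQ (p q : ℚ × ℚ) : Prop :=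
  p ≠ q ∧ (p.1 = q.1 ∨ p.2 = q.2 ∨ |p.1 - q.1| = |p.2 - q.2|)

/-- The m×n board (m rows, n columns) as integer points inside ℚ². -/
def boardQ (m n : ℕ) : Set (ℚ × ℚ) :=
  {p | ∃ i j : ℤ, 1 ≤ i ∧ i ≤ (n : ℤ) ∧ 1 ≤ j ∧ j ≤ (m : ℤ) ∧ p = ((i : ℚ), (j : ℚ))}

def DominatesQ (B : Set (ℚ × ℚ)) (D : Finset (ℚ × ℚ)) : Prop :=
  ∀ p ∈ B, p ∈ D ∨ ∃ q ∈ D, attacksQ q p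

lemma attacks_of_line (q p : ℚ × ℚ) (hne : q ≠ p)
    (h : q.1 = p.1 ∨ q.2 = p.2 ∨ q.1 - q.2 = p.1 - p.2 ∨ q.1 + q.2 = p.1 + p.2) :
    attacksQ q p := by
  refine ⟨hne, ?_⟩
  rcases h with h | h | h | h
  · exact Or.inl h
  · exact Or.inr (Or.inl h)
  · right; right; rw [abs_eq_abs]; left; linarith
  · right; right; rw [abs_eq_abs]; right; linarith

lemma line_of_attacks {q p : ℚ × ℚ} (h : attacksQ q p) :
    q.1 = p.1 ∨ q.2 = p.2 ∨ q.1 - q.2 = p.1 - p.2 ∨ q.1 + q.2 = p.1 + p.2 := by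
  rcases h.2 with h | h | h
  · exact Or.inl h
  · exact Or.inr (Or.inl h)
  · rcases abs_eq_abs.mp h with h | h
    · right; right; left; linarith
    · right; right; right; linarith

lemma cover_aux {F' : Finset (ℚ × ℚ)} {p q'' : ℚ × ℚ} (h : q'' ∈ F')
    (hl : q''.1 = p.1 ∨ q''.2 = p.2 ∨ q''.1 - q''.2 = p.1 - p.2 ∨ q''.1 + q''.2 = p.1 + p.2) :
    p ∈ F' ∨ ∃ r ∈ F', attacksQ r p := by
  by_cases he : q'' = p
  · exact Or.inl (he ▸ h)
  · exact Or.inr ⟨q'', h, attacks_of_line _ _ he hl⟩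

/-- Replacing a foursome contained in a dominating set of Q_{m×n} by its horizontal
reflection yields a dominating set of the same size. -/
theorem foursome_flip_dominates (m n : ℕ) (x y a b : ℚ)
    (hab : a ≠ b) (ha : a ≠ 0) (hb : b ≠ 0)
    (D F F' : Finset (ℚ × ℚ))
    (hF : F = {(x + a, y + b), (x - a, y - b), (x - b, y + a), (x + b, y - a)})
    (hF' : F' = {(x + a, y - b), (x - a, y + b), (x - b, y - a), (x + b, y + a)})
    (hDB : ↑D ⊆ boardQ m n) (hdom : DominatesQ (boardQ m n) D)
    (hFD : F ⊆ D) (hF'B : ↑F' ⊆ boardQ m n) (hdisj : Disjoint F' (D \ F)) :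
    DominatesQ (boardQ m n) ((D \ F) ∪ F') ∧ ((D \ F) ∪ F').card = D.card := by
  have hP1 : (x + a, y - b) ∈ F' := by simp [hF']
  have hP2 : (x - a, y + b) ∈ F' := by simp [hF']
  have hP3 : (x - b, y - a) ∈ F' := by simp [hF']
  have hP4 : (x + b, y + a) ∈ F' := by simp [hF']
  have key : ∀ p : ℚ × ℚ, (p ∈ F' ∨ ∃ r ∈ F', attacksQ r p) →
      p ∈ (D \ F) ∪ F' ∨ ∃ q ∈ (D \ F) ∪ F', attacksQ q p := by
    rintro p (h | ⟨r, hr, hrp⟩)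
    · exact Or.inl (Finset.mem_union_right _ h)
    · exact Or.inr ⟨r, Finset.mem_union_right _ hr, hrp⟩
  constructor
  · intro p hp
    rcases hdom p hp with hpD | ⟨q, hqD, hatt⟩
    · by_cases hpF : p ∈ F
      · rw [hF] at hpF
        simp only [Finset.mem_insert, Finset.mem_singleton] at hpF
        refine key p ?_
        rcases hpF with rfl | rfl | rfl | rfl
        · exact cover_aux hP1 (Or.inl rfl)
        · exact cover_aux hP2 (Or.inl rfl)
        · exact cover_aux hP3 (Or.inl rfl)
        · exact cover_aux hP4 (Or.inl rfl)
      · exact Or.inl (Finset.mem_union_left _ (Finset.mem_sdiff.mpr ⟨hpD, hpF⟩))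
    · by_cases hqF : q ∈ F
      · rw [hF] at hqF
        simp only [Finset.mem_insert, Finset.mem_singleton] at hqF
        have hl := line_of_attacks hatt
        refine key p ?_
        rcases hqF with rfl | rfl | rfl | rfl <;>
          simp only at hl <;> rcases hl with h | h | h | h
        -- q = (x+a, y+b)
        · exact cover_aux hP1 (by simp; left; linarith)
        · exact cover_aux hP2 (by simp; right; left; linarith)
        · exact cover_aux hP3 (by simp; right; right; left; linarith)
        · exact cover_aux hP4 (by simp; right; right; right; linarith)
        -- q = (x-a, y-b)
        · exact cover_aux hP2 (by simp; left; linarith)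
        · exact cover_aux hP1 (by simp; right; left; linarith)
        · exact cover_aux hP4 (by simp; right; right; left; linarith)
        · exact cover_aux hP3 (by simp; right; right; right; linarith)
        -- q = (x-b, y+a)
        · exact cover_aux hP3 (by simp; left; linarith)
        · exact cover_aux hP4 (by simp; right; left; linarith)
        · exact cover_aux hP2 (by simp; right; right; left; linarith)
        · exact cover_aux hP1 (by simp; right; right; right; linarith)
        -- q = (x+b, y-a)
        · exact cover_aux hP4 (by simp; left; linarith)
        · exact cover_aux hP3 (by simp; right; left; linarith)
        · exact cover_aux hP1 (by simp; right; right; left; linarith)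
        · exact cover_aux hP2 (by simp; right; right; right; linarith)
      · exact Or.inr ⟨q, Finset.mem_union_left _ (Finset.mem_sdiff.mpr ⟨hqD, hqF⟩), hatt⟩
  · have hcF : F.card = 4 := by
      rw [hF]
      rw [Finset.card_insert_of_notMem (by
        simp only [Finset.mem_insert, Finset.mem_singleton, Prod.mk.injEq, not_or]
        refine ⟨fun h => ?_, fun h => ?_, fun h => ?_⟩ <;>
          obtain ⟨h1, h2⟩ := h <;> [skip; skip; skip] <;> first
          | (exact ha (by linarith)) | (exact hb (by linarith)) | (exact hab (by linarith)))]
      rw [Finset.card_insert_of_notMem (by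
        simp only [Finset.mem_insert, Finset.mem_singleton, Prod.mk.injEq, not_or]
        refine ⟨fun h => ?_, fun h => ?_⟩ <;> obtain ⟨h1, h2⟩ := h <;> first
          | (exact ha (by linarith)) | (exact hb (by linarith)) | (exact hab (by linarith)))]
      rw [Finset.card_insert_of_notMem (by
        simp only [Finset.mem_singleton, Prod.mk.injEq, not_and]
        intro h1 h2
        first | (exact ha (by linarith)) | (exact hb (by linarith)) | (exact hab (by linarith)))]
      simp
    have hcF' : F'.card = 4 := by
      rw [hF']
      rw [Finset.card_insert_of_notMem (by
        simp only [Finset.mem_insert, Finset.mem_singleton, Prod.mk.injEq, not_or]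
        refine ⟨fun h => ?_, fun h => ?_, fun h => ?_⟩ <;>
          obtain ⟨h1, h2⟩ := h <;> first
          | (exact ha (by linarith)) | (exact hb (by linarith)) | (exact hab (by linarith)))]
      rw [Finset.card_insert_of_notMem (by
        simp only [Finset.mem_insert, Finset.mem_singleton, Prod.mk.injEq, not_or]
        refine ⟨fun h => ?_, fun h => ?_⟩ <;> obtain ⟨h1, h2⟩ := h <;> first
          | (exact ha (by linarith)) | (exact hb (by linarith)) | (exact hab (by linarith)))]
      rw [Finset.card_insert_of_notMem (by
        simp only [Finset.mem_singleton, Prod.mk.injEq, not_and]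
        intro h1 h2
        first | (exact ha (by linarith)) | (exact hb (by linarith)) | (exact hab (by linarith)))]
      simp
    have hle : F.card ≤ D.card := Finset.card_le_card hFD
    rw [Finset.card_union_of_disjoint hdisj.symm, Finset.card_sdiff_of_subset hFD]
    omega
end

section
/- For m ≥ 3, γ(Q_{m×(2m−3)}) ≤ m−2, witnessed by m−2 queens occupying all squares of a central column-segment: placing the board with rows 1..m and columns 1..(2m−3), the set D = {(m−1, y) : 2 ≤ y ≤ m−1} dominates Q_{m×(2m−3)}. -/
/-- For m ≥ 3, the m−2 queens {(m−1, y) : 2 ≤ y ≤ m−1} on the middle column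
dominate the m×(2m−3) board; hence γ(Q_{m×(2m−3)}) ≤ m−2. -/
theorem central_column_dominates (m : ℕ) (hm : 3 ≤ m) :
    Dominates (board m (2 * m - 3))
      ((Finset.Icc (2 : ℤ) ((m : ℤ) - 1)).image (fun y => ((m : ℤ) - 1, y))) ∧
    ((Finset.Icc (2 : ℤ) ((m : ℤ) - 1)).image (fun y => ((m : ℤ) - 1, y))).card = m - 2 ∧
    gamma m (2 * m - 3) ≤ m - 2 := by
  have hm' : (3 : ℤ) ≤ (m : ℤ) := by exact_mod_cast hm
  have hb : ((2 * m - 3 : ℕ) : ℤ) = 2 * (m : ℤ) - 3 := by omega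
  set M : ℤ := (m : ℤ) with hM
  set D := (Finset.Icc (2 : ℤ) (M - 1)).image (fun y => (M - 1, y)) with hD
  have hmemD : ∀ q : ℤ × ℤ, q ∈ D ↔ ∃ y, (2 ≤ y ∧ y ≤ M - 1) ∧ (M - 1, y) = q := by
    intro q
    simp [hD, Finset.mem_image, Finset.mem_Icc]
  have hdom : Dominates (board m (2 * m - 3)) D := by
    intro p hp
    simp only [board, Finset.mem_product, Finset.mem_Icc, hb] at hp
    obtain ⟨⟨hx1, hx2⟩, hy1, hy2⟩ := hp
    by_cases hy : 2 ≤ p.2 ∧ p.2 ≤ M - 1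
    · by_cases hx : p.1 = M - 1
      · left
        exact (hmemD p).mpr ⟨p.2, hy, by simp [Prod.ext_iff]; omega⟩
      · right
        refine ⟨(M - 1, p.2), (hmemD _).mpr ⟨p.2, hy, rfl⟩, ?_, Or.inr (Or.inl rfl)⟩
        simp only [ne_eq, Prod.ext_iff, not_and]
        omega
    · right
      by_cases hx : p.1 = M - 1
      · refine ⟨(M - 1, 2), (hmemD _).mpr ⟨2, by omega, rfl⟩, ?_, Or.inl (by omega)⟩
        simp only [ne_eq, Prod.ext_iff, not_and]
        omega
      · -- p.2 = 1 or p.2 = M, p.1 ≠ M - 1 : diagonal attack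
        have hy' : p.2 = 1 ∨ p.2 = M := by omega
        rcases le_or_gt p.1 (M - 1) with hle | hlt
        · rcases hy' with h1 | h1
          · refine ⟨(M - 1, M - p.1), (hmemD _).mpr ⟨M - p.1, by omega, rfl⟩, ?_,
              Or.inr (Or.inr (abs_eq_abs.mpr (by omega)))⟩
            simp only [ne_eq, Prod.ext_iff, not_and]; omega
          · refine ⟨(M - 1, p.1 + 1), (hmemD _).mpr ⟨p.1 + 1, by omega, rfl⟩, ?_,
              Or.inr (Or.inr (abs_eq_abs.mpr (by omega)))⟩
            simp only [ne_eq, Prod.ext_iff, not_and]; omega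
        · rcases hy' with h1 | h1
          · refine ⟨(M - 1, p.1 - M + 2), (hmemD _).mpr ⟨p.1 - M + 2, by omega, rfl⟩, ?_,
              Or.inr (Or.inr (abs_eq_abs.mpr (by omega)))⟩
            simp only [ne_eq, Prod.ext_iff, not_and]; omega
          · refine ⟨(M - 1, 2 * M - 1 - p.1), (hmemD _).mpr ⟨2 * M - 1 - p.1, by omega, rfl⟩, ?_,
              Or.inr (Or.inr (abs_eq_abs.mpr (by omega)))⟩
            simp only [ne_eq, Prod.ext_iff, not_and]; omega
  have hcard : D.card = m - 2 := by
    rw [hD, Finset.card_image_of_injective _ (fun a b h => by simpa using h),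
      Int.card_Icc]
    omega
  refine ⟨hdom, hcard, ?_⟩
  apply Nat.sInf_le
  refine ⟨D, ?_, hcard, hdom⟩
  intro q hq
  rw [hmemD] at hq
  obtain ⟨y, ⟨hy1, hy2⟩, rfl⟩ := hq
  simp only [board, Finset.mem_product, Finset.mem_Icc, hb]
  omega
end

section
/- Let m₁ ≥ n₁ ≥ 1 with not both even, let k ≥ 0, and set m = m₁ + 2n₁ − 2k, n = 2m₁ + n₁ − 2k, g = m₁ + n₁ − 2k − 1. Let B be the m×n board centered at the origin and C its central m₁×n₁ sub-board. Suppose D is a set of squares of B such that: (i) D meets every (extended) column of C; (ii) D meets every (extended) row of C; (iii) for each difference-diagonal number δ with |δ| ≤ m₁+n₁−2k−2 (of the right parity), D contains exactly one square on that diagonal, and no square of D lies on a diagonal with |δ| > m₁+n₁−2k−2; (iv) similarly for sum diagonals. Then D is a dominating set of Q_{m×n} and |D| = g. -/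
/-- Correctness of centrally strong sets: with m₁ ≥ n₁ ≥ 1 not both even, k ≥ 0
(with n₁ − 2k − 1 ≥ 0), m = m₁ + 2n₁ − 2k, n = 2m₁ + n₁ − 2k, g = m₁ + n₁ − 2k − 1,
and board squares of edge length two centered at the origin, a set `D` meeting every
extended column and row of the central m₁×n₁ sub-board, and meeting every difference
(resp. sum) diagonal of allowed number exactly once and no others, is a dominating
set of Q_{m×n} of size g. -/
theorem centrally_strong_dominates (m₁ n₁ k : ℕ) (hn₁ : 1 ≤ n₁) (hmn₁ : n₁ ≤ m₁)
    (hpar : ¬ (Even m₁ ∧ Even n₁)) (hk : 2 * k + 1 ≤ n₁)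
    (m n g : ℕ) (hm : m = m₁ + 2 * n₁ - 2 * k) (hn : n = 2 * m₁ + n₁ - 2 * k)
    (hg : g = m₁ + n₁ - 2 * k - 1)
    (B : Set (ℤ × ℤ))
    (hB : B = {p : ℤ × ℤ | |p.1| ≤ (n : ℤ) - 1 ∧ |p.2| ≤ (m : ℤ) - 1 ∧
      p.1 ≡ (n : ℤ) - 1 [ZMOD 2] ∧ p.2 ≡ (m : ℤ) - 1 [ZMOD 2]})
    (D : Finset (ℤ × ℤ)) (hD : ↑D ⊆ B)
    (hcols : ∀ x : ℤ, |x| ≤ (n₁ : ℤ) - 1 → x ≡ (n : ℤ) - 1 [ZMOD 2] → ∃ p ∈ D, p.1 = x)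
    (hrows : ∀ y : ℤ, |y| ≤ (m₁ : ℤ) - 1 → y ≡ (m : ℤ) - 1 [ZMOD 2] → ∃ p ∈ D, p.2 = y)
    (hdiff : ∀ δ : ℤ, |δ| ≤ (g : ℤ) - 1 → δ ≡ (m : ℤ) - (n : ℤ) [ZMOD 2] →
      ∃! p, p ∈ D ∧ p.2 - p.1 = δ)
    (hdiffbd : ∀ p ∈ D, |p.2 - p.1| ≤ (g : ℤ) - 1)
    (hsum : ∀ σ : ℤ, |σ| ≤ (g : ℤ) - 1 → σ ≡ (m : ℤ) + (n : ℤ) [ZMOD 2] →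
      ∃! p, p ∈ D ∧ p.2 + p.1 = σ)
    (hsumbd : ∀ p ∈ D, |p.2 + p.1| ≤ (g : ℤ) - 1) :
    (∀ p ∈ B, p ∈ D ∨ ∃ q ∈ D, attacks q p) ∧ D.card = g := by
  subst hB
  have hM : (m : ℤ) = (m₁ : ℤ) + 2 * n₁ - 2 * k := by omega
  have hN : (n : ℤ) = 2 * (m₁ : ℤ) + n₁ - 2 * k := by omega
  have hG : (g : ℤ) = (m₁ : ℤ) + n₁ - 2 * k - 1 := by omega
  constructor
  · intro p hp
    obtain ⟨hx, hy, hx2, hy2⟩ := hp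
    have hx2' : (2:ℤ) ∣ ((n : ℤ) - 1) - p.1 := hx2.dvd
    have hy2' : (2:ℤ) ∣ ((m : ℤ) - 1) - p.2 := hy2.dvd
    by_cases hcx : |p.1| ≤ (n₁:ℤ) - 1
    · obtain ⟨q, hq, hq1⟩ := hcols p.1 hcx hx2
      rcases eq_or_ne q p with rfl|hne
      · exact Or.inl hq
      · exact Or.inr ⟨q, hq, hne, Or.inl hq1⟩
    by_cases hcy : |p.2| ≤ (m₁:ℤ) - 1
    · obtain ⟨q, hq, hq2⟩ := hrows p.2 hcy hy2
      rcases eq_or_ne q p with rfl|hne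
      · exact Or.inl hq
      · exact Or.inr ⟨q, hq, hne, Or.inr (Or.inl hq2)⟩
    have key : (-((g : ℤ) - 1) ≤ p.2 - p.1 ∧ p.2 - p.1 ≤ (g : ℤ) - 1) ∨
        (-((g : ℤ) - 1) ≤ p.2 + p.1 ∧ p.2 + p.1 ≤ (g : ℤ) - 1) := by
      simp only [abs_le, not_and_or, not_le] at hx hy hcx hcy
      omega
    rcases key with h | h
    · have hpr : p.2 - p.1 ≡ (m : ℤ) - n [ZMOD 2] := by
        rw [Int.modEq_iff_dvd]; omega
      obtain ⟨q, ⟨hqD, hqd⟩, -⟩ := hdiff (p.2 - p.1) (abs_le.mpr h) hpr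
      rcases eq_or_ne q p with rfl | hne
      · exact Or.inl hqD
      · refine Or.inr ⟨q, hqD, hne, Or.inr (Or.inr ?_)⟩
        rw [show q.1 - p.1 = q.2 - p.2 by omega]
    · have hpr : p.2 + p.1 ≡ (m : ℤ) + n [ZMOD 2] := by
        rw [Int.modEq_iff_dvd]; omega
      obtain ⟨q, ⟨hqD, hqd⟩, -⟩ := hsum (p.2 + p.1) (abs_le.mpr h) hpr
      rcases eq_or_ne q p with rfl | hne
      · exact Or.inl hqD
      · refine Or.inr ⟨q, hqD, hne, Or.inr (Or.inr ?_)⟩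
        rw [show q.1 - p.1 = -(q.2 - p.2) by omega, abs_neg]
  · have hparD : ∀ p ∈ D, p.2 - p.1 ≡ (m : ℤ) - n [ZMOD 2] := by
      intro p hp
      obtain ⟨-, -, hx2, hy2⟩ := hD hp
      have hx2' : (2:ℤ) ∣ ((n : ℤ) - 1) - p.1 := hx2.dvd
      have hy2' : (2:ℤ) ∣ ((m : ℤ) - 1) - p.2 := hy2.dvd
      rw [Int.modEq_iff_dvd]; omega
    have hinj : Set.InjOn (fun p : ℤ × ℤ => p.2 - p.1) ↑D := by
      intro a ha b hb hab
      simp only [Finset.mem_coe] at ha hb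
      obtain ⟨q, -, huniq⟩ := hdiff (a.2 - a.1) (hdiffbd a ha) (hparD a ha)
      exact (huniq a ⟨ha, rfl⟩).trans (huniq b ⟨hb, hab.symm⟩).symm
    have himg : D.image (fun p : ℤ × ℤ => p.2 - p.1) =
        (Finset.range g).image (fun i : ℕ => 2 * (i : ℤ) - ((g : ℤ) - 1)) := by
      ext δ
      simp only [Finset.mem_image, Finset.mem_range]
      constructor
      · rintro ⟨p, hp, rfl⟩
        have hbd := abs_le.mp (hdiffbd p hp)
        have hpr := (hparD p hp).dvd
        refine ⟨((p.2 - p.1 + ((g : ℤ) - 1)) / 2).toNat, by omega, by omega⟩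
      · rintro ⟨i, hi, rfl⟩
        have hbd : |2 * (i : ℤ) - ((g : ℤ) - 1)| ≤ (g : ℤ) - 1 := abs_le.mpr (by omega)
        have hpr : 2 * (i : ℤ) - ((g : ℤ) - 1) ≡ (m : ℤ) - n [ZMOD 2] := by
          rw [Int.modEq_iff_dvd]; omega
        obtain ⟨p, ⟨hpD, hpd⟩, -⟩ := hdiff _ hbd hpr
        exact ⟨p, hpD, hpd⟩
    have hTinj : Function.Injective (fun i : ℕ => 2 * (i : ℤ) - ((g : ℤ) - 1)) := by
      intro a b hab
      simp only at hab
      omega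
    calc D.card = (D.image (fun p : ℤ × ℤ => p.2 - p.1)).card :=
          (Finset.card_image_of_injOn hinj).symm
      _ = g := by
          rw [himg, Finset.card_image_of_injective _ hTinj, Finset.card_range]
end
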